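/- The set of nonnegative-integer solutions v ∈ ℕ^k of a homogeneous linear equation Σᵢ cᵢvᵢ = 0 (with cᵢ ∈ ℤ fixed) is an additive submonoid of ℕ^k in which every nonzero element is a finite sum of irreducible (fundamental) elements, and the set of irreducible elements is finite. -/

import Mathlib

/-- A nonnegative-integer solution of the homogeneous linear equation
`∑ i, c i * v i = 0`. -/
def IsSol19 {k : ℕ} (c : Fin k → ℤ) (v : Fin k → ℕ) : Prop :=
  ∑ i, c i * (v i : ℤ) = 0

/-- An irreducible (fundamental) solution: a nonzero solution that is not the
sum of two nonzero solutions. -/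
def IsIrr19 {k : ℕ} (c : Fin k → ℤ) (v : Fin k → ℕ) : Prop :=
  IsSol19 c v ∧ v ≠ 0 ∧
    ∀ a b, IsSol19 c a → IsSol19 c b → a ≠ 0 → b ≠ 0 → v ≠ a + b

private lemma sol_add19 {k : ℕ} (c : Fin k → ℤ) {a b : Fin k → ℕ}
    (ha : IsSol19 c a) (hb : IsSol19 c b) : IsSol19 c (a + b) := by
  unfold IsSol19 at *
  simp only [Pi.add_apply, Nat.cast_add, mul_add, Finset.sum_add_distrib, ha, hb, add_zero]

private lemma sol_sub19 {k : ℕ} (c : Fin k → ℤ) {a v : Fin k → ℕ}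
    (ha : IsSol19 c a) (hv : IsSol19 c v) (hle : a ≤ v) : IsSol19 c (v - a) := by
  unfold IsSol19 at *
  have : ∀ i ∈ Finset.univ, c i * (((v - a) i : ℕ) : ℤ) =
      c i * (v i : ℤ) - c i * (a i : ℤ) := by
    intro i _
    have : ((v - a) i : ℕ) = v i - a i := rfl
    rw [this, Nat.cast_sub (hle i)]
    ring
  rw [Finset.sum_congr rfl this, Finset.sum_sub_distrib, ha, hv, sub_zero]

private lemma sum_pos19 {k : ℕ} {v : Fin k → ℕ} (hv : v ≠ 0) : 0 < ∑ i, v i := by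
  rcases Function.ne_iff.1 hv with ⟨i, hi⟩
  exact Finset.sum_pos' (fun _ _ => Nat.zero_le _)
    ⟨i, Finset.mem_univ i, Nat.pos_of_ne_zero hi⟩

private lemma decomp19 {k : ℕ} (c : Fin k → ℤ) :
    ∀ n v, ∑ i, v i = n → IsSol19 c v → v ≠ 0 →
      ∃ L : Multiset (Fin k → ℕ), (∀ q ∈ L, IsIrr19 c q) ∧ L.sum = v := by
  intro n
  induction n using Nat.strong_induction_on with
  | _ n ih =>
    intro v hn hsol hne
    by_cases hirr : IsIrr19 c v
    · exact ⟨{v}, by simpa using hirr, by simp⟩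
    · unfold IsIrr19 at hirr
      push_neg at hirr
      obtain ⟨a, b, hsa, hsb, hane, hbne, hab⟩ := hirr hsol hne
      have hsum : ∑ i, a i + ∑ i, b i = n := by
        rw [← hn, ← Finset.sum_add_distrib]
        exact Finset.sum_congr rfl (fun i _ => (congrFun hab i).symm)
      have ha_lt : ∑ i, a i < n := by
        have := sum_pos19 hbne; omega
      have hb_lt : ∑ i, b i < n := by
        have := sum_pos19 hane; omega
      obtain ⟨La, hLa, hLas⟩ := ih _ ha_lt a rfl hsa hane
      obtain ⟨Lb, hLb, hLbs⟩ := ih _ hb_lt b rfl hsb hbne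
      refine ⟨La + Lb, ?_, ?_⟩
      · intro q hq
        rcases Multiset.mem_add.1 hq with h | h
        · exact hLa q h
        · exact hLb q h
      · rw [Multiset.sum_add, hLas, hLbs, hab]

theorem stmt_19 (k : ℕ) (c : Fin k → ℤ) :
    IsSol19 c 0 ∧
    (∀ a b, IsSol19 c a → IsSol19 c b → IsSol19 c (a + b)) ∧
    (∀ v, IsSol19 c v → v ≠ 0 →
      ∃ L : Multiset (Fin k → ℕ), (∀ q ∈ L, IsIrr19 c q) ∧ L.sum = v) ∧
    {v : Fin k → ℕ | IsIrr19 c v}.Finite := by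
  refine ⟨by simp [IsSol19], fun a b => sol_add19 c, fun v hs hn => decomp19 c _ v rfl hs hn, ?_⟩
  -- finiteness: irreducibles form an antichain under ≤, and ℕ^k is PWO (Dickson)
  haveI : ∀ i : Fin k, IsWellOrder ℕ (· < ·) := fun _ => inferInstance
  have hpwo : Set.IsPWO {v : Fin k → ℕ | IsIrr19 c v} :=
    Set.isPWO_of_wellQuasiOrderedLE _
  refine IsAntichain.finite_of_partiallyWellOrderedOn ?_ hpwo
  intro u hu v hv hne hle
  obtain ⟨hus, hune, -⟩ := hu
  obtain ⟨hvs, hvne, hvirr⟩ := hv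
  have hd : IsSol19 c (v - u) := sol_sub19 c hus hvs hle
  have hdne : v - u ≠ 0 := by
    intro h
    apply hne
    funext i
    have h1 : v i - u i = 0 := congrFun h i
    have h2 : u i ≤ v i := hle i
    omega
  apply hvirr u (v - u) hus hd hune hdne
  funext i
  have h2 : u i ≤ v i := hle i
  simp only [Pi.add_apply, Pi.sub_apply]
  omega
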